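/- The bounded operator T on L²(𝕋) defined on the orthonormal basis {zⁿ : n ∈ ℤ} by T zⁿ = z^{2n+1} does not belong to the C*-algebra 𝔑_{L∞}; in particular 𝔑_{L∞} is a proper C*-subalgebra of B(L²(𝕋)). (Indeed T*T − TT* is the orthogonal projection onto the closed span of {z^{2n} : n ∈ ℤ}, and lim_{r→1⁻} ⟨(T*T − TT*) k_{rξ}, k_{rξ}⟩ = 1/2 for every ξ ∈ 𝕋.) -/

import Mathlib

open MeasureTheory AddCircle Filter Topology
open scoped ENNReal

noncomputable section

namespace GSIO

instance : Fact (0 < 2 * Real.pi) := ⟨by positivity⟩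

/-- The unit circle, realized as `ℝ / 2πℤ`. -/
abbrev 𝕋 : Type := AddCircle (2 * Real.pi)

/-- Normalized Lebesgue (Haar) measure on the circle. -/
abbrev μ : Measure 𝕋 := @haarAddCircle (2 * Real.pi) _

/-- `L²(𝕋)`. -/
abbrev L2 : Type := Lp ℂ 2 μ

/-- The embedding `𝕋 ⊆ ℂ`, `t ↦ e^{it}`. -/
def e : C(𝕋, ℂ) := ⟨fun t => (toCircle t : ℂ), continuous_induced_dom.comp continuous_toCircle⟩

/-- The Hardy space `H²`: the closed linear span of `{zⁿ : n ≥ 0}` in `L²`. -/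
def H2 : Submodule ℂ L2 :=
  (Submodule.span ℂ (Set.range fun n : ℕ => (fourierLp 2 (n : ℤ) : L2))).topologicalClosure

instance : CompleteSpace H2 :=
  (Submodule.isClosed_topologicalClosure _).isComplete.completeSpace_coe

/-- The Riesz projection `P₊ : L² → H² ⊆ L²`. -/
def Pplus : L2 →L[ℂ] L2 := (H2.subtypeL).comp (H2.orthogonalProjectionOnto)

/-- `P₋ = I - P₊`. -/
def Pminus : L2 →L[ℂ] L2 := ContinuousLinearMap.id ℂ L2 - Pplus

/-- The GSIO defining relation `R x = P₊(f·P₊x) + P₋(g·P₊x) + P₊(φ·P₋x) + P₋(ψ·P₋x)`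
at a point `x ∈ L²` (including the requirement that the four products lie in `L²`). -/
def gsioEq (R : L2 → L2) (f g φ ψ : 𝕋 → ℂ) (x : L2) : Prop :=
  ∃ (h₁ : MemLp (f * ⇑(Pplus x)) 2 μ) (h₂ : MemLp (g * ⇑(Pplus x)) 2 μ)
    (h₃ : MemLp (φ * ⇑(Pminus x)) 2 μ) (h₄ : MemLp (ψ * ⇑(Pminus x)) 2 μ),
    R x = Pplus (h₁.toLp _) + Pminus (h₂.toLp _) + Pplus (h₃.toLp _) + Pminus (h₄.toLp _)

/-- `R` is the (bounded) generalized singular integral operator with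
symbol matrix `(f, φ; g, ψ)`. -/
def IsGSIO (R : L2 →L[ℂ] L2) (f g φ ψ : 𝕋 → ℂ) : Prop := ∀ x : L2, gsioEq (⇑R) f g φ ψ x

/-- Normalized reproducing kernel `k_z` of `H²`, as an element of `L²`. -/
def kern (z : ℂ) : L2 :=
  (Real.sqrt (1 - ‖z‖ ^ 2) : ℂ) • ∑' n : ℕ, (starRingEnd ℂ z) ^ n • (fourierLp 2 (n : ℤ) : L2)

/-- The unit vector `z̄k̄_z : w ↦ w̄ ⬝ conj (k_z w)` of `(H²)^⊥`, as an element of `L²`. -/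
def kbar (z : ℂ) : L2 :=
  (Real.sqrt (1 - ‖z‖ ^ 2) : ℂ) • ∑' n : ℕ, z ^ n • (fourierLp 2 (-(n + 1) : ℤ) : L2)

/-- `L∞(𝕋)`: essentially bounded (a.e. strongly measurable) functions. -/
def Linf : Set (𝕋 → ℂ) := {h | MemLp h ∞ μ}

/-- `C(𝕋)`: functions (a.e. equal to) continuous functions. -/
def CT : Set (𝕋 → ℂ) := {h | ∃ c : 𝕋 → ℂ, Continuous c ∧ h =ᵐ[μ] c}

/-- `H∞ = H² ∩ L∞`. -/
def Hinf : Set (𝕋 → ℂ) := {h | ∃ h2 : MemLp h 2 μ, h2.toLp h ∈ H2 ∧ MemLp h ∞ μ}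

/-- `H∞ + C(𝕋)`. -/
def HinfC : Set (𝕋 → ℂ) := {h | ∃ a ∈ Hinf, ∃ c ∈ CT, h =ᵐ[μ] a + c}

/-- The quasicontinuous functions `QC = (H∞ + C) ∩ conj (H∞ + C)`. -/
def QC : Set (𝕋 → ℂ) := {h | h ∈ HinfC ∧ star h ∈ HinfC}

/-- The set of GSIOs with all four symbols in `S`. -/
def gsioSet (S : Set (𝕋 → ℂ)) : Set (L2 →L[ℂ] L2) :=
  {R | ∃ f g φ ψ : 𝕋 → ℂ, f ∈ S ∧ g ∈ S ∧ φ ∈ S ∧ ψ ∈ S ∧ IsGSIO R f g φ ψ}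

/-- The C*-algebra `𝔑_S` generated by the GSIOs with symbols in `S`. -/
def NAlg (S : Set (𝕋 → ℂ)) : StarSubalgebra ℂ (L2 →L[ℂ] L2) :=
  (StarAlgebra.adjoin ℂ (gsioSet S)).topologicalClosure

/-- Generators `R_{H₁} R_{H₂} - R_K` of the semicommutator ideal. -/
def semiGen (S : Set (𝕋 → ℂ)) : Set (L2 →L[ℂ] L2) :=
  {T | ∃ f₁ g₁ φ₁ ψ₁ f₂ g₂ φ₂ ψ₂ g φ : 𝕋 → ℂ,
      f₁ ∈ S ∧ g₁ ∈ S ∧ φ₁ ∈ S ∧ ψ₁ ∈ S ∧ f₂ ∈ S ∧ g₂ ∈ S ∧ φ₂ ∈ S ∧ ψ₂ ∈ S ∧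
      g ∈ S ∧ φ ∈ S ∧
      ∃ R₁ R₂ RK : L2 →L[ℂ] L2, IsGSIO R₁ f₁ g₁ φ₁ ψ₁ ∧ IsGSIO R₂ f₂ g₂ φ₂ ψ₂ ∧
        IsGSIO RK (f₁ * f₂) g φ (ψ₁ * ψ₂) ∧ T = R₁ * R₂ - RK}

/-- The closed two-sided ideal `𝔖𝔑_S` of `𝔑_S` generated by the semicommutators. -/
def SemiIdeal (S : Set (𝕋 → ℂ)) : Set (L2 →L[ℂ] L2) :=
  closure (AddSubgroup.closure
    {T | ∃ a b t : L2 →L[ℂ] L2, a ∈ NAlg S ∧ b ∈ NAlg S ∧ t ∈ semiGen S ∧ T = a * t * b} :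
      Set (L2 →L[ℂ] L2))

/-- Fredholm: closed range and finite-dimensional kernel and cokernel. -/
def IsFredholm (T : L2 →L[ℂ] L2) : Prop :=
  FiniteDimensional ℂ (LinearMap.ker (T : L2 →ₗ[ℂ] L2)) ∧
  FiniteDimensional ℂ (L2 ⧸ LinearMap.range (T : L2 →ₗ[ℂ] L2)) ∧
  IsClosed (LinearMap.range (T : L2 →ₗ[ℂ] L2) : Set L2)

/-- Fredholm index `ind T = dim ker T - dim ker T*`. -/
def ind (T : L2 →L[ℂ] L2) : ℤ :=
  (Module.finrank ℂ (LinearMap.ker (T : L2 →ₗ[ℂ] L2)) : ℤ) -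
    (Module.finrank ℂ (LinearMap.ker (ContinuousLinearMap.adjoint T : L2 →ₗ[ℂ] L2)) : ℤ)

/-- Essential spectrum (spectrum in the Calkin algebra, via Atkinson's theorem). -/
def essSpectrum (T : L2 →L[ℂ] L2) : Set ℂ := {z | ¬ IsFredholm (T - z • 1)}

/-- Essential norm: distance to the compact operators. -/
def essNorm (T : L2 →L[ℂ] L2) : ℝ :=
  sInf ((fun K => ‖T + K‖) '' {K : L2 →L[ℂ] L2 | IsCompactOperator K})

/-- Essential range of a measurable function. -/
def essRange (f : 𝕋 → ℂ) : Set ℂ := {c | ∀ ε > 0, μ {t | dist (f t) c < ε} ≠ 0}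

/-- `a` has winding number `w` about the origin, via a continuous argument lift. -/
def HasWindingNumber (a : C(𝕋, ℂ)) (w : ℤ) : Prop :=
  ∃ θ : ℝ → ℝ, ContinuousOn θ (Set.Icc 0 (2 * Real.pi)) ∧
    (∀ t ∈ Set.Icc 0 (2 * Real.pi),
      a (t : 𝕋) = (‖a (t : 𝕋)‖ : ℂ) * Complex.exp (θ t * Complex.I)) ∧
    θ (2 * Real.pi) - θ 0 = 2 * Real.pi * w

/-- The constant function `1` in `L²`. -/
def one2 : L2 := MemLp.toLp (fun _ => (1 : ℂ)) (memLp_const 1)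

/-- The rank-one operator `1 ⊗ 1 : x ↦ ⟨x,1⟩·1`. -/
def oneProj : L2 →L[ℂ] L2 := (innerSL ℂ one2).smulRight one2

/-- The Hilbert transform `ℍ = P₊ - P₋ - 1⊗1`. -/
def hilbertT : L2 →L[ℂ] L2 := Pplus - Pminus - oneProj

/-- `BMO(𝕋) = L∞ + ℍ L∞`, as a subset of `L²`. -/
def BMO2 : Set L2 := {x | ∃ a b : L2, ⇑a ∈ Linf ∧ ⇑b ∈ Linf ∧ x = a + hilbertT b}

/-- `⋂_{p ≥ 1} L^p(𝕋)`. -/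
def Lfin : Set (𝕋 → ℂ) := {h | ∀ p : ℝ, 1 ≤ p → MemLp h (ENNReal.ofReal p) μ}

/-- The GSIO relation for a map defined on functions (rather than on `L²`). -/
def gsioEqF (R : (𝕋 → ℂ) → (𝕋 → ℂ)) (f g φ ψ : 𝕋 → ℂ) (x : 𝕋 → ℂ) : Prop :=
  ∃ (hx : MemLp x 2 μ)
    (h₁ : MemLp (f * ⇑(Pplus (hx.toLp x))) 2 μ) (h₂ : MemLp (g * ⇑(Pplus (hx.toLp x))) 2 μ)
    (h₃ : MemLp (φ * ⇑(Pminus (hx.toLp x))) 2 μ) (h₄ : MemLp (ψ * ⇑(Pminus (hx.toLp x))) 2 μ),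
    R x =ᵐ[μ] ⇑(Pplus (h₁.toLp _) + Pminus (h₂.toLp _) + Pplus (h₃.toLp _) + Pminus (h₄.toLp _))

/-- Distance in `L∞` from a function to `H∞`. -/
def distHinfF (a : 𝕋 → ℂ) : ℝ :=
  sInf {r : ℝ | ∃ h ∈ Hinf, r = (eLpNorm (a - h) ∞ μ).toReal}

end GSIO

namespace GSIO

/-- The radial-limit function of `T` along the reproducing kernels `k_{rξ}` is `f`:
`lim_{r→1⁻} ⟨T k_{rξ}, k_{rξ}⟩ = f ξ` for a.e. `ξ` (inner products in the Mathlib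
convention, conjugate-linear in the first variable). -/
def symbPlus (T : L2 → L2) (f : 𝕋 → ℂ) : Prop :=
  ∀ᵐ ξ ∂μ, Tendsto
    (fun r : ℝ => (inner ℂ (kern ((r : ℂ) * e ξ)) (T (kern ((r : ℂ) * e ξ))) : ℂ))
    (𝓝[<] (1 : ℝ)) (𝓝 (f ξ))

/-- The radial-limit function of `T` along the vectors `z̄k̄_{rξ}` is `ψ`:
`lim_{r→1⁻} ⟨T z̄k̄_{rξ}, z̄k̄_{rξ}⟩ = ψ ξ` for a.e. `ξ`. -/
def symbMinus (T : L2 → L2) (ψ : 𝕋 → ℂ) : Prop :=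
  ∀ᵐ ξ ∂μ, Tendsto
    (fun r : ℝ => (inner ℂ (kbar ((r : ℂ) * e ξ)) (T (kbar ((r : ℂ) * e ξ))) : ℂ))
    (𝓝[<] (1 : ℝ)) (𝓝 (ψ ξ))

/-- `ρ(T) = (f, ψ)`: the pair of radial-limit symbol functions of `T`, in `L∞ ⊕ L∞`. -/
def HasSymbol (T : L2 →L[ℂ] L2) (f ψ : 𝕋 → ℂ) : Prop :=
  f ∈ Linf ∧ ψ ∈ Linf ∧ symbPlus (⇑T) f ∧ symbMinus (⇑T) ψ

end GSIO

namespace GSIO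

open ComplexConjugate

section Mop

lemma smul_fun_eq_mul (h x : 𝕋 → ℂ) : h • x = h * x := by
  funext t; simp [Pi.smul_apply', smul_eq_mul]

lemma memLp_mul_L2 {h : 𝕋 → ℂ} (hh : MemLp h ∞ μ) {x : 𝕋 → ℂ} (hx : MemLp x 2 μ) :
    MemLp (h * x) 2 μ := by
  have := hx.smul (p := ∞) (r := 2) hh
  rwa [smul_fun_eq_mul] at this

lemma memLp_mul_top {h h' : 𝕋 → ℂ} (hh : MemLp h ∞ μ) (hh' : MemLp h' ∞ μ) :
    MemLp (h * h') ∞ μ := by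
  have := MemLp.smul (p := ∞) (q := ∞) (r := ∞) hh' hh
  rwa [smul_fun_eq_mul] at this

lemma eLpNorm_mul_le' {h : 𝕋 → ℂ} (hh : MemLp h ∞ μ) {x : 𝕋 → ℂ} (hx : MemLp x 2 μ) :
    eLpNorm (h * x) 2 μ ≤ eLpNorm h ∞ μ * eLpNorm x 2 μ := by
  have := eLpNorm_smul_le_mul_eLpNorm (p := ∞) (q := 2) (r := 2) hx.1 hh.1
  rwa [smul_fun_eq_mul] at this

/-- The multiplication operator by an `L∞` function on `L²`. -/
def Mop (h : 𝕋 → ℂ) (hh : MemLp h ∞ μ) : L2 →L[ℂ] L2 :=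
  LinearMap.mkContinuous
    { toFun := fun x => (memLp_mul_L2 hh (Lp.memLp x)).toLp (h * ⇑x)
      map_add' := by
        intro x y
        rw [← MemLp.toLp_add (memLp_mul_L2 hh (Lp.memLp x)) (memLp_mul_L2 hh (Lp.memLp y))]
        apply MemLp.toLp_congr
        filter_upwards [Lp.coeFn_add x y] with t ht
        simp only [ht, Pi.add_apply, Pi.mul_apply, mul_add]
      map_smul' := by
        intro c x
        dsimp only [RingHom.id_apply]
        rw [← MemLp.toLp_const_smul c (memLp_mul_L2 hh (Lp.memLp x))]
        apply MemLp.toLp_congr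
        filter_upwards [Lp.coeFn_smul c x] with t ht
        simp [ht]
        ring }
    (eLpNorm h ∞ μ).toReal
    (by
      intro x
      simp only [LinearMap.coe_mk, AddHom.coe_mk]
      rw [Lp.norm_toLp (h * ⇑x) (memLp_mul_L2 hh (Lp.memLp x)), Lp.norm_def,
        ← ENNReal.toReal_mul]
      apply ENNReal.toReal_mono
      · exact ENNReal.mul_ne_top hh.2.ne (Lp.memLp x).2.ne
      · exact eLpNorm_mul_le' hh (Lp.memLp x))

lemma Mop_apply (h : 𝕋 → ℂ) (hh : MemLp h ∞ μ) (x : L2) :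
    Mop h hh x = (memLp_mul_L2 hh (Lp.memLp x)).toLp (h * ⇑x) := rfl

lemma Mop_coeFn (h : 𝕋 → ℂ) (hh : MemLp h ∞ μ) (x : L2) :
    ⇑(Mop h hh x) =ᵐ[μ] h * ⇑x := by
  rw [Mop_apply]; exact MemLp.coeFn_toLp _

lemma Mop_Mop (h h' : 𝕋 → ℂ) (hh : MemLp h ∞ μ) (hh' : MemLp h' ∞ μ)
    (hm : MemLp (h * h') ∞ μ) (x : L2) :
    Mop h hh (Mop h' hh' x) = Mop (h * h') hm x := by
  conv_lhs => rw [Mop_apply]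
  conv_rhs => rw [Mop_apply]
  refine MemLp.toLp_congr _ _ ?_
  filter_upwards [Mop_coeFn h' hh' x] with t ht
  simp only [Pi.mul_apply, ht, mul_assoc]

lemma Mop_congr (h h' : 𝕋 → ℂ) (hh : MemLp h ∞ μ) (hh' : MemLp h' ∞ μ)
    (e : h = h') (x : L2) : Mop h hh x = Mop h' hh' x := by subst e; rfl

lemma Mop_one (h1 : MemLp (1 : 𝕋 → ℂ) ∞ μ) (x : L2) : Mop 1 h1 x = x := by
  rw [Mop_apply]
  refine (MemLp.toLp_congr _ (Lp.memLp x) ?_).trans (Lp.toLp_coeFn x (Lp.memLp x))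
  filter_upwards [] with t
  simp

lemma norm_Mop_apply_eq (h : 𝕋 → ℂ) (hh : MemLp h ∞ μ) (hu : ∀ t, ‖h t‖ = 1) (x : L2) :
    ‖Mop h hh x‖ = ‖x‖ := by
  rw [Mop_apply, Lp.norm_toLp, Lp.norm_def]
  congr 1
  apply eLpNorm_congr_norm_ae
  filter_upwards [] with t
  simp [hu t]

end Mop

end GSIO

namespace GSIO

section Shift

lemma memLp_fourier (n : ℤ) : MemLp (⇑(fourier n : C(𝕋, ℂ))) ∞ μ := by
  refine memLp_top_of_bound ((map_continuous (fourier n)).aestronglyMeasurable) 1 ?_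
  filter_upwards [] with t
  simp [Circle.norm_coe]

/-- The bilateral shift: multiplication by `fourier n`. -/
def W (n : ℤ) : L2 →L[ℂ] L2 := Mop (⇑(fourier n : C(𝕋, ℂ))) (memLp_fourier n)

lemma W_W (m n : ℤ) (x : L2) : W m (W n x) = W (m + n) x := by
  rw [W, W, W, Mop_Mop _ _ _ _ (memLp_mul_top (memLp_fourier m) (memLp_fourier n))]
  refine Mop_congr _ _ _ _ ?_ x
  funext t
  simp [← fourier_add]

lemma W_zero (x : L2) : W 0 x = x := by
  have h1 : MemLp (1 : 𝕋 → ℂ) ∞ μ := memLp_top_const 1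
  rw [W, Mop_congr _ 1 (memLp_fourier 0) h1 (by funext t; simp [fourier_zero]) x]
  exact Mop_one h1 x

lemma W_cancel (n : ℤ) (x : L2) : W n (W (-n) x) = x := by
  rw [W_W, add_neg_cancel, W_zero]

lemma W_cancel' (n : ℤ) (x : L2) : W (-n) (W n x) = x := by
  rw [W_W, neg_add_cancel, W_zero]

lemma norm_W (n : ℤ) (x : L2) : ‖W n x‖ = ‖x‖ := by
  refine norm_Mop_apply_eq _ _ (fun t => ?_) x
  simp [Circle.norm_coe]

lemma W_fourierLp (m k : ℤ) : W m (fourierLp 2 k : L2) = (fourierLp 2 (m + k) : L2) := by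
  rw [W, Mop_apply]
  refine MemLp.toLp_congr _ (Lp.memLp _) ?_ |>.trans (Lp.toLp_coeFn _ _)
  filter_upwards [coeFn_fourierLp 2 k, coeFn_fourierLp 2 (m + k)] with t h1 h2
  simp only [Pi.mul_apply, h1, h2, fourier_add]

end Shift

end GSIO

namespace GSIO

section Conj

/-- Conjugation by the `n`-th power of the bilateral shift. -/
def conjS (n : ℕ) (A : L2 →L[ℂ] L2) : L2 →L[ℂ] L2 := W (-(n : ℤ)) ∘L A ∘L W (n : ℤ)

lemma conjS_apply (n : ℕ) (A : L2 →L[ℂ] L2) (x : L2) :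
    conjS n A x = W (-(n : ℤ)) (A (W (n : ℤ) x)) := rfl

lemma norm_conjS_apply_le (n : ℕ) (A : L2 →L[ℂ] L2) (x : L2) :
    ‖conjS n A x‖ ≤ ‖A‖ * ‖x‖ := by
  rw [conjS_apply, norm_W, ← norm_W (n : ℤ) x]
  exact A.le_opNorm _

lemma conjS_comp (n : ℕ) (A B : L2 →L[ℂ] L2) (x : L2) :
    conjS n (A ∘L B) x = conjS n A (conjS n B x) := by
  simp only [conjS_apply, ContinuousLinearMap.comp_apply]
  rw [W_cancel]

lemma conjS_mul (n : ℕ) (A B : L2 →L[ℂ] L2) (x : L2) :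
    conjS n (A * B) x = conjS n A (conjS n B x) := conjS_comp n A B x

lemma conjS_add (n : ℕ) (A B : L2 →L[ℂ] L2) (x : L2) :
    conjS n (A + B) x = conjS n A x + conjS n B x := by
  simp [conjS_apply, map_add]

lemma conjS_smul (n : ℕ) (c : ℂ) (A : L2 →L[ℂ] L2) (x : L2) :
    conjS n (c • A) x = c • conjS n A x := by
  simp [conjS_apply, ContinuousLinearMap.smul_apply, _root_.map_smul]

lemma conjS_one (n : ℕ) (x : L2) : conjS n (1 : L2 →L[ℂ] L2) x = x := by
  simp only [conjS_apply, ContinuousLinearMap.one_apply]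
  rw [W_cancel']

/-- The set of operators whose conjugates by powers of the shift converge strongly. -/
def SConv : Set (L2 →L[ℂ] L2) :=
  {A | ∀ x : L2, ∃ y : L2, Tendsto (fun n : ℕ => conjS n A x) atTop (𝓝 y)}

lemma tendsto_conjS_comp_seq {A : L2 →L[ℂ] L2} {y z : L2} {u : ℕ → L2}
    (hA : Tendsto (fun n => conjS n A y) atTop (𝓝 z)) (hu : Tendsto u atTop (𝓝 y)) :
    Tendsto (fun n => conjS n A (u n)) atTop (𝓝 z) := by
  rw [tendsto_iff_norm_sub_tendsto_zero] at hA hu ⊢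
  refine squeeze_zero (fun n => norm_nonneg _) (fun n => ?_)
    (g := fun n => ‖A‖ * ‖u n - y‖ + ‖conjS n A y - z‖) ?_
  · calc ‖conjS n A (u n) - z‖
        ≤ ‖conjS n A (u n) - conjS n A y‖ + ‖conjS n A y - z‖ := by
          have h := norm_add_le (conjS n A (u n) - conjS n A y) (conjS n A y - z)
          simpa using h
      _ ≤ ‖A‖ * ‖u n - y‖ + ‖conjS n A y - z‖ := by
          gcongr
          rw [← (conjS n A).map_sub]
          exact norm_conjS_apply_le n A _
  · have h2 := (hu.const_mul ‖A‖).add hA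
    rw [mul_zero, add_zero] at h2
    exact h2

/-- `SConv` as a subalgebra of `B(L²)`. -/
def SConvAlg : Subalgebra ℂ (L2 →L[ℂ] L2) where
  carrier := SConv
  one_mem' := fun x => ⟨x, by simp only [conjS_one]; exact tendsto_const_nhds⟩
  zero_mem' := fun x => ⟨0, by simp [conjS_apply, tendsto_const_nhds]⟩
  add_mem' := by
    rintro A B hA hB x
    obtain ⟨ya, hya⟩ := hA x
    obtain ⟨yb, hyb⟩ := hB x
    exact ⟨ya + yb, by simpa only [conjS_add] using hya.add hyb⟩
  mul_mem' := by
    rintro A B hA hB x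
    obtain ⟨yb, hyb⟩ := hB x
    obtain ⟨ya, hya⟩ := hA yb
    refine ⟨ya, ?_⟩
    have := tendsto_conjS_comp_seq hya hyb
    simpa only [← conjS_mul] using this
  algebraMap_mem' := by
    intro c x
    refine ⟨c • x, ?_⟩
    have : ∀ n : ℕ, conjS n (algebraMap ℂ (L2 →L[ℂ] L2) c) x = c • x := by
      intro n
      rw [Algebra.algebraMap_eq_smul_one, conjS_smul, conjS_one]
    simp only [this]
    exact tendsto_const_nhds

lemma closure_SConv_subset : closure SConv ⊆ SConv := by
  intro A hA x
  have hcau : CauchySeq (fun n : ℕ => conjS n A x) := by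
    rw [Metric.cauchySeq_iff]
    intro ε hε
    have hx1 : (0 : ℝ) < ‖x‖ + 1 := by positivity
    obtain ⟨B, hB, hAB⟩ := Metric.mem_closure_iff.mp hA (ε / 3 / (‖x‖ + 1)) (by positivity)
    obtain ⟨y, hy⟩ := hB x
    have hyc := hy.cauchySeq
    rw [Metric.cauchySeq_iff] at hyc
    obtain ⟨N, hN⟩ := hyc (ε / 3) (by positivity)
    refine ⟨N, fun m hm n hn => ?_⟩
    have key : ∀ k : ℕ, dist (conjS k A x) (conjS k B x) ≤ ε / 3 := by
      intro k
      rw [dist_eq_norm]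
      have : conjS k A x - conjS k B x = conjS k (A - B) x := by
        simp [conjS_apply, map_sub]
      rw [this]
      calc ‖conjS k (A - B) x‖ ≤ ‖A - B‖ * ‖x‖ := norm_conjS_apply_le _ _ _
        _ ≤ (ε / 3 / (‖x‖ + 1)) * (‖x‖ + 1) := by
            apply mul_le_mul (le_of_lt ?_) (by linarith) (norm_nonneg _) (by positivity)
            rwa [← dist_eq_norm]
        _ = ε / 3 := by field_simp
    calc dist (conjS m A x) (conjS n A x)
        ≤ dist (conjS m A x) (conjS m B x) + dist (conjS m B x) (conjS n B x)
            + dist (conjS n B x) (conjS n A x) := dist_triangle4 _ _ _ _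
      _ < ε / 3 + ε / 3 + ε / 3 := by
          have := hN m hm n hn
          have k1 := key m
          have k2 := key n
          rw [dist_comm (conjS n B x)] at *
          linarith [key m, key n, hN m hm n hn]
      _ = ε := by ring
  exact cauchySeq_tendsto_of_complete hcau

end Conj

end GSIO

namespace GSIO

section Proj

lemma Pplus_apply_of_mem {x : L2} (hx : x ∈ H2) : Pplus x = x := by
  have : H2.orthogonalProjectionOnto x = ⟨x, hx⟩ := by
    have := Submodule.orthogonalProjectionOnto_mem_subspace_eq_self (K := H2) ⟨x, hx⟩
    simpa using this
  simp [Pplus, this]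

lemma Pythag (x : L2) : ‖Pplus x‖ ^ 2 + ‖Pminus x‖ ^ 2 = ‖x‖ ^ 2 := by
  have horth : (inner (𝕜 := ℂ) (Pplus x) (Pminus x)) = 0 := by
    have hm : Pminus x ∈ H2ᗮ := by
      have := Submodule.sub_starProjection_mem_orthogonal (K := H2) x
      exact this
    have hp : Pplus x ∈ H2 := by
      simp only [Pplus, ContinuousLinearMap.comp_apply, Submodule.subtypeL_apply]
      exact (H2.orthogonalProjectionOnto x).2
    exact (Submodule.mem_orthogonal H2 (Pminus x)).mp hm _ hp
  have := norm_add_sq_eq_norm_sq_add_norm_sq_of_inner_eq_zero _ _ horth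
  have hsum : Pplus x + Pminus x = x := by
    simp [Pminus]
  rw [hsum] at this
  linarith

lemma norm_Pplus_apply_le (x : L2) : ‖Pplus x‖ ≤ ‖x‖ := by
  have h := Pythag x
  have h1 : ‖Pplus x‖ ^ 2 ≤ ‖x‖ ^ 2 := by nlinarith [sq_nonneg ‖Pminus x‖]
  nlinarith [norm_nonneg (Pplus x), norm_nonneg x]

lemma norm_Pminus_apply_le (x : L2) : ‖Pminus x‖ ≤ ‖x‖ := by
  have h := Pythag x
  nlinarith [norm_nonneg (Pminus x), norm_nonneg x, sq_nonneg ‖Pplus x‖]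

lemma fourierLp_mem_H2 {k : ℤ} (hk : 0 ≤ k) : (fourierLp 2 k : L2) ∈ H2 := by
  apply Submodule.le_topologicalClosure
  apply Submodule.subset_span
  refine ⟨k.toNat, ?_⟩
  show (fourierLp 2 ((k.toNat : ℤ)) : L2) = fourierLp 2 k
  congr 1
  omega

/-- The conjugated Hardy projection `Qₙ = W₋ₙ P₊ Wₙ`. -/
def Qop (n : ℕ) : L2 →L[ℂ] L2 := conjS n Pplus

lemma norm_Qop_apply_le (n : ℕ) (x : L2) : ‖Qop n x‖ ≤ ‖x‖ := by
  rw [Qop, conjS_apply, norm_W, ← norm_W (n : ℤ) x]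
  exact norm_Pplus_apply_le _

lemma Qop_fourierLp (n : ℕ) {k : ℤ} (hk : 0 ≤ k + n) :
    Qop n (fourierLp 2 k : L2) = fourierLp 2 k := by
  rw [Qop, conjS_apply, W_fourierLp, Pplus_apply_of_mem (fourierLp_mem_H2 (by omega)),
    W_fourierLp]
  congr 1
  omega

lemma tendsto_Qop (x : L2) : Tendsto (fun n : ℕ => Qop n x) atTop (𝓝 x) := by
  -- first, for elements of the span of the Fourier basis
  have hspan : ∀ d ∈ Submodule.span ℂ (Set.range (fourierLp (T := 2 * Real.pi) 2)),
      ∃ N : ℕ, ∀ n ≥ N, Qop n d = d := by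
    intro d hd
    induction hd using Submodule.span_induction with
    | mem y hy =>
      obtain ⟨k, rfl⟩ := hy
      exact ⟨k.natAbs, fun n hn => Qop_fourierLp n (by omega)⟩
    | zero => exact ⟨0, fun n _ => map_zero _⟩
    | add y z _ _ hy hz =>
      obtain ⟨N₁, h₁⟩ := hy
      obtain ⟨N₂, h₂⟩ := hz
      exact ⟨max N₁ N₂, fun n hn => by
        rw [map_add, h₁ n (le_trans (le_max_left _ _) hn), h₂ n (le_trans (le_max_right _ _) hn)]⟩
    | smul c y _ hy =>
      obtain ⟨N, hN⟩ := hy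
      exact ⟨N, fun n hn => by rw [_root_.map_smul, hN n hn]⟩
  rw [Metric.tendsto_atTop]
  intro ε hε
  have hdense : Dense (Submodule.span ℂ (Set.range (fourierLp (T := 2 * Real.pi) 2)) : Set L2) := by
    have := span_fourierLp_closure_eq_top (T := 2 * Real.pi) (p := 2) (by norm_num)
    rw [Submodule.dense_iff_topologicalClosure_eq_top]
    exact this
  obtain ⟨d, hd, hdx⟩ := hdense.exists_dist_lt x (show (0:ℝ) < ε / 3 by positivity)
  obtain ⟨N, hN⟩ := hspan d hd
  refine ⟨N, fun n hn => ?_⟩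
  have hkey : Qop n x - x = Qop n (x - d) + (d - x) := by
    have h1 : Qop n d = d := hN n hn
    rw [map_sub, h1]; abel
  rw [dist_eq_norm, hkey]
  calc ‖Qop n (x - d) + (d - x)‖ ≤ ‖Qop n (x - d)‖ + ‖d - x‖ := norm_add_le _ _
    _ ≤ ‖x - d‖ + ‖d - x‖ := by gcongr; exact norm_Qop_apply_le _ _
    _ < ε := by
        rw [dist_eq_norm] at hdx
        rw [norm_sub_rev d x]
        linarith

lemma Pminus_eq (x : L2) : Pminus x = x - Pplus x := by simp [Pminus]

lemma tendsto_Qop' (x : L2) : Tendsto (fun n : ℕ => conjS n Pminus x) atTop (𝓝 0) := by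
  have : ∀ n : ℕ, conjS n Pminus x = x - Qop n x := by
    intro n
    rw [Qop, conjS_apply, conjS_apply, Pminus_eq, map_sub, W_cancel']
  simp only [this]
  have := (tendsto_const_nhds (x := x) (f := atTop (α := ℕ))).sub (tendsto_Qop x)
  simpa using this

end Proj

end GSIO

namespace GSIO

open ComplexConjugate

section GSIOForm

lemma memLp_star {h : 𝕋 → ℂ} (hh : MemLp h ∞ μ) : MemLp (star h) ∞ μ := by
  refine ⟨?_, ?_⟩
  · have : (star h : 𝕋 → ℂ) = fun t => star (h t) := rfl
    rw [this]
    exact continuous_star.comp_aestronglyMeasurable hh.1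
  · have : eLpNorm (star h) ∞ μ = eLpNorm h ∞ μ := by
      apply eLpNorm_congr_norm_ae
      filter_upwards [] with t
      simp [Pi.star_apply, norm_star]
    rw [this]
    exact hh.2

lemma conjS_Mop (n : ℕ) (f : 𝕋 → ℂ) (hf : MemLp f ∞ μ) (x : L2) :
    conjS n (Mop f hf) x = Mop f hf x := by
  rw [conjS_apply]
  rw [show W ((n : ℤ)) x = Mop _ (memLp_fourier ((n : ℤ))) x from rfl]
  rw [show ∀ y, W (-(n : ℤ)) y = Mop _ (memLp_fourier (-(n : ℤ))) y from fun _ => rfl]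
  rw [Mop_Mop _ _ _ _ (memLp_mul_top (memLp_fourier (-(n : ℤ))) hf)]
  rw [Mop_Mop _ _ _ _ (memLp_mul_top (memLp_mul_top (memLp_fourier (-(n : ℤ))) hf)
    (memLp_fourier ((n : ℤ))))]
  refine Mop_congr _ _ _ hf ?_ x
  funext t
  have hu : ((fourier (-(n : ℤ)) : C(𝕋, ℂ)) t) * ((fourier (n : ℤ) : C(𝕋, ℂ)) t) = 1 := by
    rw [← fourier_add]
    simp
  simp only [Pi.mul_apply]
  calc (fourier (-(n:ℤ)) : C(𝕋, ℂ)) t * f t * (fourier (n:ℤ) : C(𝕋, ℂ)) t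
      = f t * ((fourier (-(n:ℤ)) : C(𝕋, ℂ)) t * (fourier (n:ℤ) : C(𝕋, ℂ)) t) := by ring
    _ = f t := by rw [hu, mul_one]

lemma conjS_PMP (n : ℕ) (P P' : L2 →L[ℂ] L2) (f : 𝕋 → ℂ) (hf : MemLp f ∞ μ) (x : L2) :
    conjS n (P ∘L Mop f hf ∘L P') x = conjS n P (Mop f hf (conjS n P' x)) := by
  rw [conjS_comp, conjS_comp, conjS_Mop]

lemma norm_Qop'_apply_le (n : ℕ) (x : L2) : ‖conjS n Pminus x‖ ≤ ‖x‖ := by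
  rw [conjS_apply, norm_W, ← norm_W (n : ℤ) x]
  exact norm_Pminus_apply_le _

lemma tendsto_Qop_seq {u : ℕ → L2} {y : L2} (hu : Tendsto u atTop (𝓝 y)) :
    Tendsto (fun n => Qop n (u n)) atTop (𝓝 y) := by
  rw [tendsto_iff_norm_sub_tendsto_zero] at hu ⊢
  refine squeeze_zero (fun n => norm_nonneg _) (fun n => ?_)
    (g := fun n => ‖u n - y‖ + ‖Qop n y - y‖) ?_
  · calc ‖Qop n (u n) - y‖
        ≤ ‖Qop n (u n) - Qop n y‖ + ‖Qop n y - y‖ := by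
          have h := norm_add_le (Qop n (u n) - Qop n y) (Qop n y - y)
          simpa using h
      _ ≤ ‖u n - y‖ + ‖Qop n y - y‖ := by
          gcongr
          rw [← (Qop n).map_sub]
          exact norm_Qop_apply_le _ _
  · have h2 : Tendsto (fun n : ℕ => ‖Qop n y - y‖) atTop (𝓝 0) := by
      have := tendsto_Qop y
      rwa [tendsto_iff_norm_sub_tendsto_zero] at this
    have := hu.add h2
    simpa using this

lemma tendsto_Qop'_seq {u : ℕ → L2} {y : L2} (hu : Tendsto u atTop (𝓝 y)) :
    Tendsto (fun n => conjS n Pminus (u n)) atTop (𝓝 0) := by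
  rw [tendsto_iff_norm_sub_tendsto_zero] at hu
  rw [show (0 : L2) = 0 from rfl, tendsto_iff_norm_sub_tendsto_zero]
  refine squeeze_zero (fun n => norm_nonneg _) (fun n => ?_)
    (g := fun n => ‖u n - y‖ + ‖conjS n Pminus y‖) ?_
  · calc ‖conjS n Pminus (u n) - 0‖
        = ‖conjS n Pminus (u n)‖ := by rw [sub_zero]
      _ ≤ ‖conjS n Pminus (u n) - conjS n Pminus y‖ + ‖conjS n Pminus y‖ := by
          have h := norm_add_le (conjS n Pminus (u n) - conjS n Pminus y) (conjS n Pminus y)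
          simpa using h
      _ ≤ ‖u n - y‖ + ‖conjS n Pminus y‖ := by
          gcongr
          rw [← (conjS n Pminus).map_sub]
          exact norm_Qop'_apply_le _ _
  · have h2 : Tendsto (fun n : ℕ => ‖conjS n Pminus y‖) atTop (𝓝 0) := by
      have := tendsto_Qop' y
      rw [tendsto_iff_norm_sub_tendsto_zero] at this
      simpa using this
    have := hu.add h2
    simpa using this

/-- Any operator of the GSIO form with `L∞` symbols is shift-asymptotic. -/
lemma gsioForm_mem_SConv {f g φ ψ : 𝕋 → ℂ} (hf : MemLp f ∞ μ) (hg : MemLp g ∞ μ)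
    (hφ : MemLp φ ∞ μ) (hψ : MemLp ψ ∞ μ) :
    (Pplus ∘L Mop f hf ∘L Pplus + Pminus ∘L Mop g hg ∘L Pplus
      + Pplus ∘L Mop φ hφ ∘L Pminus + Pminus ∘L Mop ψ hψ ∘L Pminus) ∈ SConv := by
  intro x
  refine ⟨Mop f hf x, ?_⟩
  have expand : ∀ n : ℕ,
      conjS n (Pplus ∘L Mop f hf ∘L Pplus + Pminus ∘L Mop g hg ∘L Pplus
        + Pplus ∘L Mop φ hφ ∘L Pminus + Pminus ∘L Mop ψ hψ ∘L Pminus) x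
      = Qop n (Mop f hf (Qop n x)) + conjS n Pminus (Mop g hg (Qop n x))
        + Qop n (Mop φ hφ (conjS n Pminus x)) + conjS n Pminus (Mop ψ hψ (conjS n Pminus x)) := by
    intro n
    simp only [conjS_add, conjS_PMP, Qop]
  simp only [expand]
  have t1 : Tendsto (fun n => Qop n (Mop f hf (Qop n x))) atTop (𝓝 (Mop f hf x)) :=
    tendsto_Qop_seq (((Mop f hf).continuous.tendsto x).comp (tendsto_Qop x))
  have t2 : Tendsto (fun n => conjS n Pminus (Mop g hg (Qop n x))) atTop (𝓝 0) :=
    tendsto_Qop'_seq (((Mop g hg).continuous.tendsto x).comp (tendsto_Qop x))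
  have t3 : Tendsto (fun n => Qop n (Mop φ hφ (conjS n Pminus x))) atTop (𝓝 0) := by
    have h0 : Tendsto (fun n => Mop φ hφ (conjS n Pminus x)) atTop (𝓝 0) := by
      have := ((Mop φ hφ).continuous.tendsto 0).comp (tendsto_Qop' x)
      simpa [Function.comp_def] using this
    exact tendsto_Qop_seq h0
  have t4 : Tendsto (fun n => conjS n Pminus (Mop ψ hψ (conjS n Pminus x))) atTop (𝓝 0) := by
    have h0 : Tendsto (fun n => Mop ψ hψ (conjS n Pminus x)) atTop (𝓝 0) := by
      have := ((Mop ψ hψ).continuous.tendsto 0).comp (tendsto_Qop' x)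
      simpa [Function.comp_def] using this
    exact tendsto_Qop'_seq h0
  have := ((t1.add t2).add t3).add t4
  simpa using this

end GSIOForm

end GSIO

namespace GSIO

section Identity

/-- A GSIO with `L∞` symbols equals the canonical operator-form expression. -/
lemma isGSIO_eq {R : L2 →L[ℂ] L2} {f g φ ψ : 𝕋 → ℂ}
    (hf : MemLp f ∞ μ) (hg : MemLp g ∞ μ) (hφ : MemLp φ ∞ μ) (hψ : MemLp ψ ∞ μ)
    (hR : IsGSIO R f g φ ψ) :
    R = Pplus ∘L Mop f hf ∘L Pplus + Pminus ∘L Mop g hg ∘L Pplus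
      + Pplus ∘L Mop φ hφ ∘L Pminus + Pminus ∘L Mop ψ hψ ∘L Pminus := by
  ext1 x
  obtain ⟨h₁, h₂, h₃, h₄, hx⟩ := hR x
  have e1 : h₁.toLp _ = Mop f hf (Pplus x) := by
    rw [Mop_apply]
  have e2 : h₂.toLp _ = Mop g hg (Pplus x) := by
    rw [Mop_apply]
  have e3 : h₃.toLp _ = Mop φ hφ (Pminus x) := by
    rw [Mop_apply]
  have e4 : h₄.toLp _ = Mop ψ hψ (Pminus x) := by
    rw [Mop_apply]
  rw [hx, e1, e2, e3, e4]
  simp only [ContinuousLinearMap.add_apply, ContinuousLinearMap.comp_apply]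

lemma adjoint_Mop (h : 𝕋 → ℂ) (hh : MemLp h ∞ μ) :
    ContinuousLinearMap.adjoint (Mop h hh) = Mop (star h) (memLp_star hh) := by
  symm
  rw [ContinuousLinearMap.eq_adjoint_iff]
  intro x y
  rw [MeasureTheory.L2.inner_def, MeasureTheory.L2.inner_def]
  apply integral_congr_ae
  filter_upwards [Mop_coeFn (star h) (memLp_star hh) x, Mop_coeFn h hh y] with t h1 h2
  rw [h1, h2]
  simp only [RCLike.inner_apply, Pi.mul_apply, Pi.star_apply, map_mul]
  simp only [RCLike.star_def, RingHomCompTriple.comp_apply, Complex.conj_conj,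
    RingHom.id_apply]
  ring

lemma adjoint_Pplus : ContinuousLinearMap.adjoint Pplus = Pplus := by
  exact (isSelfAdjoint_starProjection H2).adjoint_eq

lemma adjoint_Pminus : ContinuousLinearMap.adjoint Pminus = Pminus := by
  rw [Pminus, map_sub, adjoint_Pplus]
  congr 1
  rw [← ContinuousLinearMap.star_eq_adjoint]
  exact star_one _

lemma star_gsioForm {f g φ ψ : 𝕋 → ℂ} (hf : MemLp f ∞ μ) (hg : MemLp g ∞ μ)
    (hφ : MemLp φ ∞ μ) (hψ : MemLp ψ ∞ μ) :
    star (Pplus ∘L Mop f hf ∘L Pplus + Pminus ∘L Mop g hg ∘L Pplus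
      + Pplus ∘L Mop φ hφ ∘L Pminus + Pminus ∘L Mop ψ hψ ∘L Pminus)
    = Pplus ∘L Mop (star f) (memLp_star hf) ∘L Pplus
      + Pminus ∘L Mop (star φ) (memLp_star hφ) ∘L Pplus
      + Pplus ∘L Mop (star g) (memLp_star hg) ∘L Pminus
      + Pminus ∘L Mop (star ψ) (memLp_star hψ) ∘L Pminus := by
  rw [ContinuousLinearMap.star_eq_adjoint, map_add, map_add, map_add]
  rw [ContinuousLinearMap.adjoint_comp, ContinuousLinearMap.adjoint_comp,
    ContinuousLinearMap.adjoint_comp, ContinuousLinearMap.adjoint_comp,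
    ContinuousLinearMap.adjoint_comp, ContinuousLinearMap.adjoint_comp,
    ContinuousLinearMap.adjoint_comp, ContinuousLinearMap.adjoint_comp]
  rw [adjoint_Pplus, adjoint_Pminus, adjoint_Mop, adjoint_Mop, adjoint_Mop, adjoint_Mop]
  simp only [ContinuousLinearMap.comp_assoc]
  abel

/-- The generating GSIOs, and their adjoints, are shift-asymptotic. -/
lemma gsio_and_star_subset_SConv :
    gsioSet Linf ∪ star (gsioSet Linf) ⊆ SConv := by
  rintro R (hR | hR)
  · obtain ⟨f, g, φ, ψ, hf, hg, hφ, hψ, hgsio⟩ := hR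
    rw [isGSIO_eq hf hg hφ hψ hgsio]
    exact gsioForm_mem_SConv hf hg hφ hψ
  · rw [Set.mem_star] at hR
    obtain ⟨f, g, φ, ψ, hf, hg, hφ, hψ, hgsio⟩ := hR
    have : R = star (star R) := (star_star R).symm
    rw [this, isGSIO_eq hf hg hφ hψ hgsio, star_gsioForm hf hg hφ hψ]
    exact gsioForm_mem_SConv _ _ _ _

/-- Everything in `𝔑_{L∞}` is shift-asymptotic. -/
lemma nalg_subset_SConv : (NAlg Linf : Set (L2 →L[ℂ] L2)) ⊆ SConv := by
  intro T hT
  have hadj : (StarAlgebra.adjoin ℂ (gsioSet Linf) : Set (L2 →L[ℂ] L2)) ⊆ SConv := by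
    intro A hA
    have hA' : A ∈ Algebra.adjoin ℂ (gsioSet Linf ∪ star (gsioSet Linf)) := by
      rw [← StarAlgebra.adjoin_toSubalgebra] at *
      exact hA
    have hle : Algebra.adjoin ℂ (gsioSet Linf ∪ star (gsioSet Linf)) ≤ SConvAlg :=
      Algebra.adjoin_le gsio_and_star_subset_SConv
    exact hle hA'
  have hT' : T ∈ closure (StarAlgebra.adjoin ℂ (gsioSet Linf) : Set (L2 →L[ℂ] L2)) := by
    rw [← StarSubalgebra.topologicalClosure_coe]
    exact hT
  exact closure_SConv_subset (closure_mono hadj hT')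

end Identity

end GSIO

namespace GSIO

section Final

lemma not_tendsto_fourierLp {s : ℕ → ℤ} (hs : Function.Injective s) (y : L2) :
    ¬ Tendsto (fun n : ℕ => (fourierLp 2 (s n) : L2)) atTop (𝓝 y) := by
  intro h
  have hc := h.cauchySeq
  rw [Metric.cauchySeq_iff] at hc
  obtain ⟨N, hN⟩ := hc 1 one_pos
  have hd := hN N le_rfl (N + 1) (by omega)
  have hne : s N ≠ s (N + 1) := fun e => by have := hs e; omega
  have horth := orthonormal_fourier (T := 2 * Real.pi)
  have hinner : (inner (𝕜 := ℂ) (fourierLp 2 (s N) : L2) (fourierLp 2 (s (N + 1)) : L2)) = 0 :=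
    horth.2 hne
  have hnorm : ‖(fourierLp 2 (s N) : L2) - fourierLp 2 (s (N + 1))‖ ^ 2 = 2 := by
    rw [@norm_sub_sq ℂ, hinner, horth.1 (s N), horth.1 (s (N + 1))]
    norm_num
  rw [dist_eq_norm] at hd
  nlinarith [norm_nonneg ((fourierLp 2 (s N) : L2) - fourierLp 2 (s (N + 1)))]

lemma measurePreserving_neg' : MeasurePreserving (fun t : 𝕋 => -t) μ μ :=
  Measure.measurePreserving_neg μ

/-- The flip operator `x(t) ↦ x(-t)`. -/
def Fop : L2 →L[ℂ] L2 :=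
  (Lp.compMeasurePreservingₗᵢ (E := ℂ) (p := 2) ℂ _ measurePreserving_neg').toContinuousLinearMap

lemma Fop_fourierLp (k : ℤ) : Fop (fourierLp 2 k) = fourierLp 2 (-k) := by
  apply Lp.ext
  have h1 := Lp.coeFn_compMeasurePreserving (fourierLp 2 k : L2) measurePreserving_neg'
  have h2 := coeFn_fourierLp (T := 2 * Real.pi) 2 (-k)
  have h3 := coeFn_fourierLp (T := 2 * Real.pi) 2 k
  have h3' : (⇑(fourierLp 2 k : L2)) ∘ (fun t : 𝕋 => -t)
      =ᵐ[μ] (⇑(fourier k : C(𝕋, ℂ))) ∘ (fun t : 𝕋 => -t) :=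
    measurePreserving_neg'.quasiMeasurePreserving.ae_eq_comp h3
  refine ((h1.trans h3').trans ?_).trans h2.symm
  filter_upwards [] with t
  show (fourier k : C(𝕋, ℂ)) (-t) = (fourier (-k) : C(𝕋, ℂ)) t
  rw [fourier_apply, fourier_apply, smul_neg, ← neg_zsmul]

lemma Fop_not_mem_SConv : Fop ∉ SConv := by
  intro hF
  obtain ⟨y, hy⟩ := hF (fourierLp 2 0)
  have hform : ∀ n : ℕ, conjS n Fop (fourierLp 2 0) = fourierLp 2 (-(2 * (n : ℤ))) := by
    intro n
    rw [conjS_apply, W_fourierLp, show ((n : ℤ) + 0) = (n : ℤ) by ring, Fop_fourierLp,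
      W_fourierLp]
    congr 1
    ring
  simp only [hform] at hy
  exact not_tendsto_fourierLp (fun a b h => by omega) y hy

end Final

end GSIO

namespace GSIO

/-- The bounded operator on `L²(𝕋)` determined by `T zⁿ = z^{2n+1}`
(`n ∈ ℤ`) does not belong to `𝔑_{L∞}`; in particular `𝔑_{L∞}` is a proper
C*-subalgebra of `B(L²(𝕋))`. -/
theorem nalg_proper :
    (∀ T : L2 →L[ℂ] L2,
      (∀ n : ℤ, T (fourierLp 2 n) = fourierLp 2 (2 * n + 1)) → T ∉ NAlg Linf) ∧
    NAlg Linf ≠ ⊤ := by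
  constructor
  · intro T hT hmem
    obtain ⟨y, hy⟩ := nalg_subset_SConv hmem (fourierLp 2 0)
    have hform : ∀ n : ℕ, conjS n T (fourierLp 2 0) = fourierLp 2 ((n : ℤ) + 1) := by
      intro n
      rw [conjS_apply, W_fourierLp, show ((n : ℤ) + 0) = (n : ℤ) by ring, hT (n : ℤ),
        W_fourierLp]
      congr 1
      ring
    simp only [hform] at hy
    exact not_tendsto_fourierLp (fun a b h => by omega) y hy
  · intro htop
    have hmem : Fop ∈ NAlg Linf := by rw [htop]; trivial
    exact Fop_not_mem_SConv (nalg_subset_SConv hmem)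

end GSIO
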